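/- Let X be a measurable space and k a bounded measurable kernel on X. Define the kernel score S_k(P,x) = -∫ k(ω,x) dP(ω) + (1/2)∫∫ k(ω,ω′) dP(ω) dP(ω′) + (1/2) k(x,x) for probability measures P on X and x ∈ X, and S_k(Q,P) = ∫ S_k(Q,x) dP(x). Then 2(S_k(Q,P) - S_k(P,P)) = ‖Φ_k(P) - Φ_k(Q)‖²_{H_k} ≥ 0 for all probability measures P, Q; in particular S_k is a proper scoring rule: S_k(P,P) ≤ S_k(Q,P). -/

import Mathlib

open MeasureTheory
open scoped RealInnerProductSpace

/-- The kernel score associated with the kernel `k`, evaluated at the probability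
measure `R` and the outcome `x`. -/
noncomputable def kernelScore {X : Type*} [MeasurableSpace X]
    (k : X → X → ℝ) (R : MeasureTheory.Measure X) (x : X) : ℝ :=
  -(∫ ω, k ω x ∂ R) + (1 / 2) * (∫ ω, ∫ ω', k ω ω' ∂ R ∂ R) + (1 / 2) * k x x

theorem stmt19 {X H : Type*} [MeasurableSpace X]
    [NormedAddCommGroup H] [InnerProductSpace ℝ H] [CompleteSpace H]
    (Φ : X → H) (k : X → X → ℝ)
    (hk : ∀ x y, k x y = ⟪Φ x, Φ y⟫)
    (hΦm : StronglyMeasurable Φ) (C : ℝ) (hC : ∀ x, ‖Φ x‖ ≤ C)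
    (P Q : Measure X) [IsProbabilityMeasure P] [IsProbabilityMeasure Q] :
    2 * ((∫ x, kernelScore k Q x ∂P) - ∫ x, kernelScore k P x ∂P)
        = ‖(∫ x, Φ x ∂P) - ∫ x, Φ x ∂Q‖ ^ 2 ∧
      0 ≤ 2 * ((∫ x, kernelScore k Q x ∂P) - ∫ x, kernelScore k P x ∂P) ∧
      (∫ x, kernelScore k P x ∂P) ≤ ∫ x, kernelScore k Q x ∂P := by
  -- integrability of Φ
  have hΦint : ∀ (R : Measure X) [IsProbabilityMeasure R], Integrable Φ R := by
    intro R _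
    exact Integrable.mono' (integrable_const C) hΦm.aestronglyMeasurable
      (Filter.Eventually.of_forall hC)
  -- first integral
  have h1 : ∀ (R : Measure X) [IsProbabilityMeasure R] (x : X),
      ∫ ω, k ω x ∂ R = ⟪∫ ω, Φ ω ∂ R, Φ x⟫ := by
    intro R _ x
    have : ∫ ω, k ω x ∂ R = ∫ ω, ⟪Φ x, Φ ω⟫ ∂ R := by
      simp only [hk]
      exact integral_congr_ae (Filter.Eventually.of_forall fun ω => real_inner_comm _ _)
    rw [this, integral_inner (hΦint R), real_inner_comm]
  -- double integral
  have h2 : ∀ (R : Measure X) [IsProbabilityMeasure R],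
      ∫ ω, ∫ ω', k ω ω' ∂ R ∂ R = ⟪∫ ω, Φ ω ∂ R, ∫ ω, Φ ω ∂ R⟫ := by
    intro R _
    have : ∀ ω, ∫ ω', k ω ω' ∂ R = ⟪Φ ω, ∫ ω', Φ ω' ∂ R⟫ := by
      intro ω
      simp only [hk]
      exact integral_inner (hΦint R) _
    simp only [this]
    have := integral_inner (𝕜 := ℝ) (hΦint R) (∫ ω', Φ ω' ∂ R)
    calc ∫ ω, ⟪Φ ω, ∫ ω', Φ ω' ∂ R⟫ ∂ R
        = ∫ ω, ⟪∫ ω', Φ ω' ∂ R, Φ ω⟫ ∂ R :=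
          integral_congr_ae (Filter.Eventually.of_forall fun ω => real_inner_comm _ _)
      _ = ⟪∫ ω', Φ ω' ∂ R, ∫ ω, Φ ω ∂ R⟫ := integral_inner (hΦint R) _
      _ = _ := real_inner_comm _ _
  set p := ∫ x, Φ x ∂P with hp
  set q := ∫ x, Φ x ∂Q with hq
  -- integrability facts over P
  have hint1 : ∀ v : H, Integrable (fun x => ⟪v, Φ x⟫) P := fun v =>
    (hΦint P).const_inner v
  have hint2 : Integrable (fun x => ⟪Φ x, Φ x⟫) P := by
    refine Integrable.mono' (integrable_const (C * C))
      (hΦm.inner hΦm).aestronglyMeasurable (Filter.Eventually.of_forall fun x => ?_)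
    have := abs_real_inner_le_norm (Φ x) (Φ x)
    calc ‖⟪Φ x, Φ x⟫‖ ≤ ‖Φ x‖ * ‖Φ x‖ := by rw [Real.norm_eq_abs]; exact this
      _ ≤ C * C := mul_le_mul (hC x) (hC x) (norm_nonneg _) ((norm_nonneg _).trans (hC x))
  -- integral of kernelScore
  have hscore : ∀ (R : Measure X) [IsProbabilityMeasure R],
      ∫ x, kernelScore k R x ∂P
        = -⟪∫ ω, Φ ω ∂ R, p⟫ + (1/2) * ⟪∫ ω, Φ ω ∂ R, ∫ ω, Φ ω ∂ R⟫
          + (1/2) * ∫ x, ⟪Φ x, Φ x⟫ ∂P := by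
    intro R _
    set r := ∫ ω, Φ ω ∂ R with hr
    have heq : ∀ x, kernelScore k R x
        = -⟪r, Φ x⟫ + (1/2) * ⟪r, r⟫ + (1/2) * ⟪Φ x, Φ x⟫ := by
      intro x
      unfold kernelScore
      rw [h1 R x, h2 R, hk]
    simp only [heq]
    have hI1 : Integrable (fun x => -⟪r, Φ x⟫ + (1/2 : ℝ) * ⟪r, r⟫) P :=
      ((hint1 r).neg).add (integrable_const _)
    have hI2 : Integrable (fun x => (1/2 : ℝ) * ⟪Φ x, Φ x⟫) P := hint2.const_mul _
    have hI3 : Integrable (fun x => -⟪r, Φ x⟫) P := (hint1 r).neg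
    rw [integral_add hI1 hI2, integral_add hI3 (integrable_const _),
        integral_neg, integral_inner (hΦint P), integral_const, integral_const_mul]
    simp [hp]
  have hSP := hscore P
  have hSQ := hscore Q
  rw [← hq] at hSQ
  have hmain : 2 * ((∫ x, kernelScore k Q x ∂P) - ∫ x, kernelScore k P x ∂P)
      = ‖p - q‖ ^ 2 := by
    rw [hSP, hSQ]
    have hexp : ‖p - q‖ ^ 2 = ‖p‖^2 - 2 * ⟪p, q⟫ + ‖q‖^2 := norm_sub_sq_real p q
    rw [hexp, ← real_inner_self_eq_norm_sq p, ← real_inner_self_eq_norm_sq q,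
        real_inner_comm q p]
    ring
  refine ⟨hmain, ?_, ?_⟩
  · rw [hmain]; positivity
  · nlinarith [hmain, sq_nonneg (‖p - q‖)]
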